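/- Let X, Z be real random variables on a probability space with E(Z²) > 0, and suppose m·Z ≤ X ≤ M·Z pointwise for real constants m ≤ M. Then E(X²) - E(XZ)²/E(Z²) ≤ (1/E(Z²))·(M·E(Z²) - E(XZ))·(E(XZ) - m·E(Z²)) ≤ (E(Z²)/4)·(M - m)². -/
import Mathlib


open MeasureTheory

theorem one_variance_upper_bound
    {Ω : Type*} [MeasurableSpace Ω] (μ : Measure Ω) [IsProbabilityMeasure μ]
    (X Z : Ω → ℝ) (m M : ℝ) (hmM : m ≤ M)
    (hX2 : Integrable (fun ω => X ω * X ω) μ)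
    (hXZ : Integrable (fun ω => X ω * Z ω) μ)
    (hZ2 : Integrable (fun ω => Z ω * Z ω) μ)
    (hZpos : 0 < ∫ ω, Z ω * Z ω ∂μ)
    (hlb : ∀ ω, m * Z ω ≤ X ω) (hub : ∀ ω, X ω ≤ M * Z ω) :
    (∫ ω, X ω * X ω ∂μ) - (∫ ω, X ω * Z ω ∂μ) ^ 2 / (∫ ω, Z ω * Z ω ∂μ)
        ≤ (1 / ∫ ω, Z ω * Z ω ∂μ) *
            ((M * (∫ ω, Z ω * Z ω ∂μ) - ∫ ω, X ω * Z ω ∂μ) *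
              ((∫ ω, X ω * Z ω ∂μ) - m * ∫ ω, Z ω * Z ω ∂μ)) ∧
      (1 / ∫ ω, Z ω * Z ω ∂μ) *
          ((M * (∫ ω, Z ω * Z ω ∂μ) - ∫ ω, X ω * Z ω ∂μ) *
            ((∫ ω, X ω * Z ω ∂μ) - m * ∫ ω, Z ω * Z ω ∂μ))
        ≤ ((∫ ω, Z ω * Z ω ∂μ) / 4) * (M - m) ^ 2 := by
  set A := ∫ ω, X ω * X ω ∂μ with hA
  set B := ∫ ω, X ω * Z ω ∂μ with hB
  set C := ∫ ω, Z ω * Z ω ∂μ with hC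
  have hint : Integrable (fun ω => (M * Z ω - X ω) * (X ω - m * Z ω)) μ := by
    have : (fun ω => (M * Z ω - X ω) * (X ω - m * Z ω))
        = fun ω => (M + m) * (X ω * Z ω) - X ω * X ω - (m * M) * (Z ω * Z ω) := by
      funext ω; ring
    rw [this]
    exact ((hXZ.const_mul _).sub hX2).sub (hZ2.const_mul _)
  have hval : ∫ ω, (M * Z ω - X ω) * (X ω - m * Z ω) ∂μ
      = (M + m) * B - A - (m * M) * C := by
    have : (fun ω => (M * Z ω - X ω) * (X ω - m * Z ω))
        = fun ω => (M + m) * (X ω * Z ω) - X ω * X ω - (m * M) * (Z ω * Z ω) := by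
      funext ω; ring
    rw [this]
    have hI1 : Integrable (fun ω => (M + m) * (X ω * Z ω) - X ω * X ω) μ :=
      (hXZ.const_mul (M + m)).sub hX2
    rw [integral_sub hI1 (hZ2.const_mul (m * M)),
        integral_sub (hXZ.const_mul (M + m)) hX2, integral_const_mul, integral_const_mul]
  have hnn : 0 ≤ (M + m) * B - A - (m * M) * C := by
    rw [← hval]
    refine integral_nonneg fun ω => ?_
    exact mul_nonneg (by linarith [hub ω]) (by linarith [hlb ω])
  constructor
  · have hC0 : C ≠ 0 := ne_of_gt hZpos
    have hdiff : (1 / C) * ((M * C - B) * (B - m * C)) - (A - B ^ 2 / C)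
        = (M + m) * B - A - (m * M) * C := by
      field_simp
      ring
    linarith
  · have key : (M * C - B) * (B - m * C) ≤ (C * (M - m) / 2) ^ 2 := by
      nlinarith [sq_nonneg ((M * C - B) - (B - m * C))]
    calc (1 / C) * ((M * C - B) * (B - m * C)) ≤ (1 / C) * ((C * (M - m) / 2) ^ 2) := by
          apply mul_le_mul_of_nonneg_left key (by positivity)
      _ = (C / 4) * (M - m) ^ 2 := by field_simp; ring
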